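/- arXiv:1012.5083 — 2 statements merged into one kernel-verified Lean document; each statement's English description precedes it below -/
import Mathlib

section
/- Let ρ1: G → Aut_k(W1) be a continuous linear representation of G on a d-dimensional k-vector space W1, and ρ2: G → Aut_k(W2) a continuous linear representation of G on a finite-dimensional k-vector space W2. Suppose End_H(W1) = k·id and that W1 and W2 are isomorphic as H-modules. Then there exists a continuous character χ: Γ = G/H → k^* such that W2 is isomorphic as a G-module to the twist W1(χ), where W1(χ) denotes W1 with the G-action g·w = χ(π(g))·ρ1(g)(w). In particular, the one-dimensional G-modules det(W2) and det(W1) ⊗ χ^d are isomorphic, where det(W) denotes the top exterior power Λ^{dim W} of W with the induced G-action. -/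
/-- A topological group is *procyclic* if it contains a dense cyclic subgroup. -/
def Procyclic (Γ : Type*) [Group Γ] [TopologicalSpace Γ] : Prop :=
  ∃ γ : Γ, Dense ((Subgroup.zpowers γ : Subgroup Γ) : Set Γ)

/-- `subGn H n` is the subgroup `G_n = π⁻¹(nΓ)` where `π : G → Γ = G/H` is the quotient map and
`nΓ` is the (sub)group generated by the `n`-th powers in `Γ` (which, `Γ` being procyclic,
hence abelian, is just the image of the `n`-th power map). -/
def subGn {G : Type*} [Group G] (H : Subgroup G) [H.Normal] (n : ℕ) : Subgroup G :=
  Subgroup.comap (QuotientGroup.mk' H)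
    (Subgroup.closure {x : G ⧸ H | ∃ γ : G ⧸ H, γ ^ n = x})

/-- A `k`-submodule `p` of `V` is invariant under the action (through `ρ`) of a subgroup `S`. -/
def RepInvariant {k G V : Type*} [Field k] [Group G] [AddCommGroup V] [Module k V]
    (ρ : G →* (V →ₗ[k] V)) (S : Subgroup G) (p : Submodule k V) : Prop :=
  ∀ g ∈ S, ∀ v ∈ p, ρ g v ∈ p

/-- A `k`-linear endomorphism `f` of `V` is `S`-equivariant, i.e. `f ∈ End_S(V)`. -/
def RepEquivariant {k G V : Type*} [Field k] [Group G] [AddCommGroup V] [Module k V]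
    (ρ : G →* (V →ₗ[k] V)) (S : Subgroup G) (f : V →ₗ[k] V) : Prop :=
  ∀ g ∈ S, ∀ v : V, f (ρ g v) = ρ g (f v)

/-- `V` is a simple `S`-module: it is nonzero and its only `S`-invariant `k`-submodules
are `⊥` and `⊤`. -/
def RepSimple {k G V : Type*} [Field k] [Group G] [AddCommGroup V] [Module k V]
    (ρ : G →* (V →ₗ[k] V)) (S : Subgroup G) : Prop :=
  (⊤ : Submodule k V) ≠ ⊥ ∧
    ∀ p : Submodule k V, RepInvariant ρ S p → p = ⊥ ∨ p = ⊤

/-- `V` is an absolutely simple `S`-module: it is a simple `S`-module and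
`End_S(V) = k·id`. -/
def RepAbsSimple {k G V : Type*} [Field k] [Group G] [AddCommGroup V] [Module k V]
    (ρ : G →* (V →ₗ[k] V)) (S : Subgroup G) : Prop :=
  RepSimple ρ S ∧
    ∀ f : V →ₗ[k] V, RepEquivariant ρ S f → ∃ c : k, f = c • (LinearMap.id : V →ₗ[k] V)

/-- `V` is a semisimple `S`-module: every `S`-invariant submodule admits an
`S`-invariant complement. -/
def RepSemisimple {k G V : Type*} [Field k] [Group G] [AddCommGroup V] [Module k V]
    (ρ : G →* (V →ₗ[k] V)) (S : Subgroup G) : Prop :=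
  ∀ p : Submodule k V, RepInvariant ρ S p →
    ∃ q : Submodule k V, RepInvariant ρ S q ∧ IsCompl p q

/-- **Lemma (twist).** Let `G` be a profinite group, `H` a closed normal subgroup with
procyclic quotient `Γ = G/H`, and `k` a locally compact field. Let `ρ1 : G → Aut_k(W1)` be a
continuous linear representation on a `d`-dimensional `k`-vector space, `ρ2 : G → Aut_k(W2)` a
continuous finite-dimensional linear representation, with `End_H(W1) = k·id` and `W1 ≅ W2` as
`H`-modules. Then there exists a continuous character `χ : Γ = G/H → k^*` such that `W2` is
isomorphic as a `G`-module to the twist `W1(χ)` (with action `g·w = χ(π(g))·ρ1(g)(w)`).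
In particular the one-dimensional `G`-modules `det(W2)` and `det(W1) ⊗ χ^d` are isomorphic;
since a one-dimensional `G`-module is determined up to isomorphism by its character, and the
character of the top exterior power `det(W)` is `g ↦ det(ρ(g))`, this is expressed by the
equality of characters `det(ρ2(g)) = χ(π(g))^d · det(ρ1(g))` for all `g ∈ G`. -/
theorem twist_of_H_isomorphic
    {k G : Type*} [Field k] [TopologicalSpace k] [IsTopologicalRing k] [LocallyCompactSpace k]
    [Group G] [TopologicalSpace G] [IsTopologicalGroup G]
    [CompactSpace G] [TotallyDisconnectedSpace G] [T2Space G]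
    (H : Subgroup G) [H.Normal] (hHclosed : IsClosed (H : Set G))
    (hproc : Procyclic (G ⧸ H))
    (d m : ℕ) (hd : 0 < d)
    (ρ1 : G →* ((Fin d → k) →ₗ[k] (Fin d → k)))
    (ρ2 : G →* ((Fin m → k) →ₗ[k] (Fin m → k)))
    (hcont1 : Continuous fun p : G × (Fin d → k) => ρ1 p.1 p.2)
    (hcont2 : Continuous fun p : G × (Fin m → k) => ρ2 p.1 p.2)
    (hEnd : ∀ f : (Fin d → k) →ₗ[k] (Fin d → k),
      RepEquivariant ρ1 H f →
        ∃ c : k, f = c • (LinearMap.id : (Fin d → k) →ₗ[k] (Fin d → k)))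
    (hHiso : ∃ e : (Fin d → k) ≃ₗ[k] (Fin m → k),
      ∀ g ∈ H, ∀ v : Fin d → k, e (ρ1 g v) = ρ2 g (e v)) :
    ∃ χ : (G ⧸ H) →* kˣ,
      Continuous (fun γ : G ⧸ H => (χ γ : k)) ∧
      (∃ e : (Fin d → k) ≃ₗ[k] (Fin m → k),
        ∀ (g : G) (v : Fin d → k),
          e ((χ (QuotientGroup.mk g) : k) • ρ1 g v) = ρ2 g (e v)) ∧
      (∀ g : G,
        LinearMap.det (ρ2 g) = (χ (QuotientGroup.mk g) : k) ^ d * LinearMap.det (ρ1 g))  := by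
  obtain ⟨e, he⟩ := hHiso
  set i0 : Fin d := ⟨0, hd⟩ with hi0
  set v0 : Fin d → k := Pi.single i0 1 with hv0
  have hv0ne : v0 ≠ 0 := by
    intro h
    have := congrFun h i0
    simp [hv0] at this
  have hρ1inv : ∀ (g : G) (v : Fin d → k), ρ1 g⁻¹ (ρ1 g v) = v := by
    intro g v
    have : (ρ1 g⁻¹ * ρ1 g) v = v := by
      rw [← map_mul, inv_mul_cancel, map_one]; rfl
    simpa using this
  have hρ1inv' : ∀ (g : G) (v : Fin d → k), ρ1 g (ρ1 g⁻¹ v) = v := by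
    intro g v
    have := hρ1inv g⁻¹ v
    simpa using this
  have hρ2inv : ∀ (g : G) (v : Fin m → k), ρ2 g⁻¹ (ρ2 g v) = v := by
    intro g v
    have : (ρ2 g⁻¹ * ρ2 g) v = v := by
      rw [← map_mul, inv_mul_cancel, map_one]; rfl
    simpa using this
  set F : G → (Fin d → k) →ₗ[k] (Fin d → k) :=
    fun g => e.symm.toLinearMap ∘ₗ ρ2 g ∘ₗ e.toLinearMap ∘ₗ ρ1 g⁻¹ with hFdef
  have hsymm : ∀ g ∈ H, ∀ w : Fin m → k, e.symm (ρ2 g w) = ρ1 g (e.symm w) := by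
    intro g hg w
    apply e.injective
    rw [he g hg, e.apply_symm_apply, e.apply_symm_apply]
  have hmulap1 : ∀ (a b : G) (v : Fin d → k), ρ1 a (ρ1 b v) = ρ1 (a * b) v := by
    intro a b v
    rw [← Module.End.mul_apply, ← map_mul]
  have hmulap2 : ∀ (a b : G) (v : Fin m → k), ρ2 a (ρ2 b v) = ρ2 (a * b) v := by
    intro a b v
    rw [← Module.End.mul_apply, ← map_mul]
  have hFequiv : ∀ g : G, RepEquivariant ρ1 H (F g) := by
    intro g h hh v
    have hh' : g⁻¹ * h * g ∈ H := Subgroup.Normal.conj_mem' ‹H.Normal› h hh g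
    have e1 : ρ1 g⁻¹ (ρ1 h v) = ρ1 (g⁻¹ * h * g) (ρ1 g⁻¹ v) := by
      rw [hmulap1, hmulap1, show g⁻¹ * h * g * g⁻¹ = g⁻¹ * h by group]
    have e2 : ∀ w : Fin m → k, ρ2 g (ρ2 (g⁻¹ * h * g) w) = ρ2 h (ρ2 g w) := by
      intro w
      rw [hmulap2, hmulap2, show g * (g⁻¹ * h * g) = h * g by group]
    simp only [hFdef, LinearMap.comp_apply, LinearEquiv.coe_coe]
    rw [e1, he _ hh', e2, hsymm _ hh]
  choose c hc using fun g => hEnd (F g) (hFequiv g)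
  have hkey : ∀ (g : G) (w : Fin d → k), ρ2 g (e w) = e (c g • ρ1 g w) := by
    intro g w
    have h1 := congrArg (fun f : (Fin d → k) →ₗ[k] (Fin d → k) => f (ρ1 g w)) (hc g)
    simp only [hFdef, LinearMap.comp_apply, LinearEquiv.coe_coe, LinearMap.smul_apply,
      LinearMap.id_apply] at h1
    rw [hρ1inv] at h1
    rw [← h1, e.apply_symm_apply]
  have hsmul_eq : ∀ a b : k, a • v0 = b • v0 → a = b := by
    intro a b h
    have := congrFun h i0
    simpa [hv0, Pi.single_eq_same] using this
  have hcne : ∀ g : G, c g ≠ 0 := by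
    intro g hg0
    have h1 := hkey g v0
    rw [hg0, zero_smul, map_zero] at h1
    have h2 : e v0 = 0 := by
      have := congrArg (ρ2 g⁻¹) h1
      rw [hρ2inv, map_zero] at this
      exact this
    exact hv0ne (e.map_eq_zero_iff.mp h2)
  have hmul : ∀ g g' : G, c (g * g') = c g * c g' := by
    intro g g'
    set w : Fin d → k := ρ1 (g * g')⁻¹ v0 with hw
    have hwv : ρ1 (g * g') w = v0 := hρ1inv' (g * g') v0
    have h1 : ρ2 (g * g') (e w) = e (c (g * g') • v0) := by
      rw [hkey, hwv]
    have h2 : ρ2 (g * g') (e w) = e ((c g * c g') • v0) := by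
      calc ρ2 (g * g') (e w) = ρ2 g (ρ2 g' (e w)) := (hmulap2 g g' (e w)).symm
        _ = ρ2 g (e (c g' • ρ1 g' w)) := by rw [hkey g']
        _ = e (c g • ρ1 g (c g' • ρ1 g' w)) := hkey g _
        _ = e ((c g * c g') • v0) := by
            simp only [map_smul, smul_smul, hmulap1, hwv]
    exact hsmul_eq _ _ (e.injective (h1.symm.trans h2))
  have hH1 : ∀ h ∈ H, c h = 1 := by
    intro h hh
    have h1 : e (c h • ρ1 h v0) = e (ρ1 h v0) := by
      rw [← hkey, he h hh]
    have h2 : c h • ρ1 h v0 = ρ1 h v0 := e.injective h1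
    have hx : ρ1 h v0 ≠ 0 := by
      intro h0
      apply hv0ne
      have := congrArg (ρ1 h⁻¹) h0
      rwa [hρ1inv, map_zero] at this
    have h3 : (c h - 1) • ρ1 h v0 = 0 := by
      rw [sub_smul, one_smul, h2, sub_self]
    rcases smul_eq_zero.mp h3 with h4 | h4
    · exact sub_eq_zero.mp h4
    · exact absurd h4 hx
  set χ0 : G →* kˣ := MonoidHom.mk' (fun g => Units.mk0 (c g) (hcne g))
    (fun g g' => Units.ext (by simpa using hmul g g')) with hχ0
  have hχ0H : ∀ h ∈ H, χ0 h = 1 := by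
    intro h hh
    exact Units.ext (by simpa [hχ0] using hH1 h hh)
  refine ⟨QuotientGroup.lift H χ0 hχ0H, ?_, ⟨e, ?_⟩, ?_⟩
  · -- continuity
    rw [(QuotientGroup.isQuotientMap_mk H).continuous_iff]
    have hcfun : ∀ g : G, c g = (e.symm (ρ2 g (e (ρ1 g⁻¹ v0)))) i0 := by
      intro g
      have h1 := congrArg (fun f : (Fin d → k) →ₗ[k] (Fin d → k) => f v0 i0) (hc g)
      simp only [hFdef, LinearMap.comp_apply, LinearEquiv.coe_coe, LinearMap.smul_apply,
        LinearMap.id_apply, Pi.smul_apply] at h1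
      rw [h1]
      simp [hv0, Pi.single_eq_same]
    have ce : Continuous fun v : Fin d → k => e v :=
      LinearMap.continuous_on_pi e.toLinearMap
    have ces : Continuous fun v : Fin m → k => e.symm v :=
      LinearMap.continuous_on_pi e.symm.toLinearMap
    have c1 : Continuous fun g : G => ρ1 g⁻¹ v0 :=
      hcont1.comp (continuous_inv.prodMk continuous_const)
    have c2 : Continuous fun g : G => e (ρ1 g⁻¹ v0) := ce.comp c1
    have c3 : Continuous fun g : G => ρ2 g (e (ρ1 g⁻¹ v0)) :=
      hcont2.comp (continuous_id.prodMk c2)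
    have c4 : Continuous fun g : G => e.symm (ρ2 g (e (ρ1 g⁻¹ v0))) := ces.comp c3
    have c5 : Continuous fun g : G => c g := by
      have : (fun g : G => c g) = fun g : G => (e.symm (ρ2 g (e (ρ1 g⁻¹ v0)))) i0 :=
        funext hcfun
      rw [this]
      exact (continuous_apply i0).comp c4
    exact c5
  · -- twist isomorphism
    intro g v
    have : ((QuotientGroup.lift H χ0 hχ0H (QuotientGroup.mk g) : kˣ) : k) = c g := rfl
    rw [this]
    exact (hkey g v).symm
  · -- determinants
    intro g
    have hconj : ρ2 g = e.toLinearMap ∘ₗ (c g • ρ1 g) ∘ₗ e.symm.toLinearMap := by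
      apply LinearMap.ext
      intro w
      simp only [LinearMap.comp_apply, LinearEquiv.coe_coe, LinearMap.smul_apply]
      rw [← hkey, e.apply_symm_apply]
    have hχ : ((QuotientGroup.lift H χ0 hχ0H (QuotientGroup.mk g) : kˣ) : k) = c g := rfl
    rw [hχ, hconj, LinearMap.det_conj, LinearMap.det_smul]
    congr 1
    congr 1
    simp
end

section
/- Let ρ: G → Aut_k(V) be a continuous linear representation of G on a d-dimensional k-vector space V such that the G-module V is semisimple. Then there exists a positive integer n depending only on d (one may take n = (d!·d^d)!) such that the center of the k-algebra End_H(V) is contained in End_{G_n}(V). -/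
universe u v


open Module in
theorem aut_order_bound {k : Type*} [Field k] {V : Type*} [AddCommGroup V] [Module k V]
    [FiniteDimensional k V] {d : ℕ} (hdV : Module.finrank k V = d) (hd0 : 0 < d)
    {R : Type*} [CommRing R] [Algebra k R] [IsReduced R]
    (φ : R →ₐ[k] Module.End k V) (hφ : Function.Injective φ)
    (σ : R ≃ₐ[k] R) : σ ^ (Nat.factorial (Nat.factorial d * d ^ d)) = 1 := by
  classical
  have hfdR : FiniteDimensional k R := FiniteDimensional.of_injective φ.toLinearMap hφ
  have hart : IsArtinianRing R := isArtinian_of_tower k inferInstance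
  have hfinι : Finite {I : Ideal R | I.IsMaximal} := (IsArtinianRing.setOfPred_isMaximal_finite R).to_subtype
  cases nonempty_fintype {I : Ideal R | I.IsMaximal}
  set ι := {I : Ideal R | I.IsMaximal} with hι
  -- membership in all maximal ideals implies zero
  have mem_all : ∀ x : R, (∀ I : ι, x ∈ I.1) → x = 0 := by
    intro x hx
    have hnil : x ∈ nilradical R := by
      rw [nilradical_eq_sInf, Submodule.mem_sInf]
      intro J hJ
      exact hx ⟨J, (IsArtinianRing.isPrime_iff_isMaximal J).1 hJ⟩
    rw [mem_nilradical] at hnil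
    exact hnil.eq_zero
  -- idempotents
  have coprime : Pairwise fun I J : ι => IsCoprime I.1 J.1 := fun I J hIJ =>
    Ideal.isCoprime_iff_sup_eq.mpr (I.2.coprime_of_ne J.2 (fun h => hIJ (Subtype.ext h)))
  have hex := fun I : ι => Ideal.pi_quotient_surjective coprime (Pi.single I (1 : R ⧸ I.1))
  choose e he using hex
  have he_self : ∀ I : ι, Ideal.Quotient.mk I.1 (e I) = 1 := fun I => by
    have := he I I; rwa [Pi.single_eq_same] at this
  have he_ne : ∀ I J : ι, I ≠ J → e I ∈ J.1 := fun I J hIJ => by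
    have h := he I J
    rw [Pi.single_eq_of_ne (Ne.symm hIJ)] at h
    exact Ideal.Quotient.eq_zero_iff_mem.1 h
  have e_not_mem : ∀ I : ι, e I ∉ I.1 := fun I hIn => by
    have h1 : e I - 1 ∈ I.1 := Ideal.Quotient.eq.mp
      ((he_self I).trans (map_one (Ideal.Quotient.mk I.1)).symm)
    have h2 : (1 : R) ∈ I.1 := by
      have := I.1.sub_mem hIn h1
      simpa using this
    exact I.2.ne_top (I.1.eq_top_iff_one.mpr h2)
  have orth : ∀ I J : ι, I ≠ J → e I * e J = 0 := fun I J hIJ => mem_all _ (fun L => by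
    by_cases hL : L = J
    · subst hL
      exact Ideal.mul_mem_right _ _ (he_ne I L hIJ)
    · exact Ideal.mul_mem_left _ _ (he_ne J L (fun h => hL h.symm)))
  have idem : ∀ I : ι, e I * e I = e I := fun I => by
    have hmem : ∀ L : ι, e I * e I - e I ∈ L.1 := fun L => by
      by_cases hL : L = I
      · subst hL
        have h0 : Ideal.Quotient.mk L.1 (e L * e L - e L) = 0 := by
          rw [map_sub, map_mul, he_self]; rw [mul_one, sub_self]
        exact Ideal.Quotient.eq_zero_iff_mem.1 h0
      · have hm : e I ∈ L.1 := he_ne I L (fun h => hL h.symm)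
        exact sub_mem (Ideal.mul_mem_left _ _ hm) hm
    exact sub_eq_zero.1 (mem_all _ hmem)
  -- number of maximal ideals is at most d
  set r := Fintype.card ι with hr
  have hEne : ∀ I : ι, φ (e I) ≠ 0 := fun I h => e_not_mem I (by
    have h0 : e I = 0 := hφ (by rw [h, map_zero])
    rw [h0]; exact zero_mem _)
  have hWind : iSupIndep fun I : ι => LinearMap.range (φ (e I)) := by
    intro I
    have hsup : (⨆ (J : ι) (_ : J ≠ I), LinearMap.range (φ (e J))) ≤ LinearMap.ker (φ (e I)) := by
      refine iSup₂_le fun J hJ => ?_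
      rintro v ⟨w, rfl⟩
      have : φ (e I) (φ (e J) w) = 0 := by
        rw [← Module.End.mul_apply, ← map_mul, orth I J (fun h => hJ h.symm), map_zero]
        rfl
      exact LinearMap.mem_ker.mpr this
    have hdisj : Disjoint (LinearMap.range (φ (e I))) (LinearMap.ker (φ (e I))) := by
      rw [Submodule.disjoint_def]
      rintro x ⟨w, rfl⟩ hx
      have hx' : φ (e I) (φ (e I) w) = 0 := LinearMap.mem_ker.mp hx
      calc φ (e I) w = φ (e I * e I) w := by rw [idem]
        _ = φ (e I) (φ (e I) w) := by rw [map_mul]; rfl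
        _ = 0 := hx'
    exact hdisj.mono_right hsup
  have hrd : r ≤ d := by
    have h1 := hWind.subtype_ne_bot_le_finrank
    rw [hdV] at h1
    have h2 : Fintype.card {I : ι // LinearMap.range (φ (e I)) ≠ ⊥} = r := by
      refine Fintype.card_congr (Equiv.subtypeUnivEquiv fun I => ?_)
      rw [Ne, LinearMap.range_eq_bot]
      exact hEne I
    omega
  -- residue fields have k-dimension at most d
  have hKd : ∀ I : ι, Module.finrank k (R ⧸ I.1) ≤ d := by
    intro I
    obtain ⟨w, hw⟩ : ∃ w, φ (e I) w ≠ 0 := by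
      by_contra h
      push_neg at h
      exact hEne I (LinearMap.ext fun w => h w)
    set v := φ (e I) w with hv
    have hJmem : ∀ x : R, x ∈ I.1 → φ x v = 0 := by
      intro x hx
      have hxe : x * e I = 0 := mem_all _ (fun L => by
        by_cases hL : L = I
        · subst hL; exact Ideal.mul_mem_right _ _ hx
        · exact Ideal.mul_mem_left _ _ (he_ne I L (fun h2 => hL h2.symm)))
      rw [hv, ← Module.End.mul_apply, ← map_mul, hxe, map_zero]
      rfl
    let J : Ideal R :=
      { carrier := {x : R | φ x v = 0}
        add_mem' := fun {a b} ha hb => by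
          have ha' : φ a v = 0 := ha
          have hb' : φ b v = 0 := hb
          show φ (a + b) v = 0
          rw [map_add, LinearMap.add_apply, ha', hb', add_zero]
        zero_mem' := by
          show φ 0 v = 0
          rw [map_zero]; rfl
        smul_mem' := fun c x hx => by
          have hx' : φ x v = 0 := hx
          show φ (c • x) v = 0
          rw [smul_eq_mul, map_mul, Module.End.mul_apply, hx', map_zero] }
    have hIJ : I.1 ≤ J := fun x hx => hJmem x hx
    have hJtop : J ≠ ⊤ := by
      intro h
      have h1 : (1 : R) ∈ J := h.symm ▸ Submodule.mem_top
      have h2 : φ 1 v = 0 := h1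
      rw [map_one] at h2
      exact hw h2
    have hJI : J = I.1 := (I.2.eq_of_le hJtop hIJ).symm
    let μ : R →ₗ[k] V :=
      { toFun := fun x => φ x v
        map_add' := fun a b => by
          show φ (a + b) v = φ a v + φ b v
          rw [map_add, LinearMap.add_apply]
        map_smul' := fun c a => by
          show φ (c • a) v = c • (φ a v)
          rw [map_smul φ c a, LinearMap.smul_apply] }
    have hker1 : Submodule.restrictScalars k I.1 ≤ LinearMap.ker μ := fun x hx =>
      LinearMap.mem_ker.mpr (hJmem x hx)
    have hker2 : LinearMap.ker μ ≤ Submodule.restrictScalars k I.1 := fun x hx => by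
      have hx' : x ∈ J := LinearMap.mem_ker.mp hx
      rw [hJI] at hx'
      exact hx'
    have hinj : Function.Injective (Submodule.liftQ (Submodule.restrictScalars k I.1) μ hker1) :=
      LinearMap.ker_eq_bot.1 (Submodule.ker_liftQ_eq_bot _ _ _ hker2)
    have h1 : Module.finrank k (R ⧸ Submodule.restrictScalars k I.1) ≤ Module.finrank k V :=
      LinearMap.finrank_le_finrank_of_injective hinj
    have h2 : Module.finrank k (R ⧸ I.1) = Module.finrank k (R ⧸ Submodule.restrictScalars k I.1) :=
      (Submodule.Quotient.restrictScalarsEquiv k (I.1 : Submodule R R)).symm.finrank_eq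
    rw [hdV] at h1
    omega
  -- automorphism groups of residue fields
  letI instFld : ∀ I : ι, Field (R ⧸ I.1) := fun I => @Ideal.Quotient.field _ _ I.1 I.2
  letI hfinK : ∀ I : ι, FiniteDimensional k (R ⧸ I.1) := fun I =>
    Module.Finite.of_surjective (Ideal.Quotient.mkₐ k I.1).toLinearMap
      Ideal.Quotient.mk_surjective
  have hAut : ∀ I : ι, Fintype.card ((R ⧸ I.1) ≃ₐ[k] (R ⧸ I.1)) ≤ d := by
    intro I
    have c1 : Fintype.card ((R ⧸ I.1) ≃ₐ[k] (R ⧸ I.1)) ≤ Fintype.card ((R ⧸ I.1) →ₐ[k] (R ⧸ I.1)) :=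
      Fintype.card_le_of_injective _ (AlgEquiv.coe_algHom_injective)
    have c2 := finrank_algHom k (R ⧸ I.1)
    have c3 := Module.finrank_linearMap_self k (R ⧸ I.1) (R ⧸ I.1)
    have c4 := hKd I
    omega
  -- the permutation of maximal ideals induced by an automorphism
  let π : (R ≃ₐ[k] R) →* Equiv.Perm ι :=
    { toFun := fun α =>
        { toFun := fun I => ⟨Ideal.comap (α.symm : R →+* R) I.1,
            Ideal.comap_isMaximal_of_surjective _ α.symm.surjective (H := I.2)⟩
          invFun := fun I => ⟨Ideal.comap (α : R →+* R) I.1,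
            Ideal.comap_isMaximal_of_surjective _ α.surjective (H := I.2)⟩
          left_inv := fun I => Subtype.ext (Ideal.ext fun x => by
            simp [Ideal.mem_comap])
          right_inv := fun I => Subtype.ext (Ideal.ext fun x => by
            simp [Ideal.mem_comap]) }
      map_one' := rfl
      map_mul' := fun α β => by
        refine Equiv.ext fun I => Subtype.ext (Ideal.ext fun x => ?_)
        simp [Ideal.mem_comap, AlgEquiv.aut_mul] }
  have hone : π (σ ^ Nat.factorial r) = 1 := by
    rw [map_pow]
    have hcard : Fintype.card (Equiv.Perm ι) = Nat.factorial r := Fintype.card_perm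
    rw [← hcard]
    exact pow_card_eq_one
  set ψ := σ ^ Nat.factorial r with hψ
  have hfix : ∀ I : ι, Ideal.comap (ψ.symm : R →+* R) I.1 = I.1 := by
    intro I
    have := congrArg (fun p : Equiv.Perm ι => ((p I) : Ideal R)) hone
    exact this
  have hmap : ∀ I : ι, I.1 = Ideal.map (ψ : R →+* R) I.1 := fun I => by
    have h1 : Ideal.map (ψ : R →+* R) I.1 = Ideal.comap (ψ.symm : R →+* R) I.1 := by
      ext x
      rw [Ideal.mem_map_iff_of_surjective (ψ : R →+* R)
        (fun y => ⟨ψ.symm y, by simp⟩), Ideal.mem_comap]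
      constructor
      · rintro ⟨y, hy, rfl⟩
        simpa using hy
      · intro hx
        exact ⟨ψ.symm x, hx, by simp⟩
    rw [h1, hfix I]
  -- induced automorphisms of the residue fields
  let ψI : ∀ I : ι, (R ⧸ I.1) ≃ₐ[k] (R ⧸ I.1) := fun I =>
    Ideal.quotientEquivAlg I.1 I.1 ψ (hmap I)
  have hcomm : ∀ (I : ι) (y : R),
      Ideal.Quotient.mk I.1 (ψ y) = ψI I (Ideal.Quotient.mk I.1 y) := fun I y =>
    (Ideal.quotientEquiv_mk I.1 I.1 (ψ : R ≃+* R) (hmap I) y).symm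
  have hiter : ∀ (I : ι) (j : ℕ) (x : R),
      Ideal.Quotient.mk I.1 ((ψ ^ j) x) = ((ψI I) ^ j) (Ideal.Quotient.mk I.1 x) := by
    intro I j
    induction j with
    | zero => intro x; simp
    | succ j ih =>
      intro x
      have h1 : (ψ ^ (j + 1)) x = (ψ ^ j) (ψ x) := by
        rw [pow_succ, AlgEquiv.mul_apply]
      rw [h1, ih (ψ x), hcomm I x, pow_succ, AlgEquiv.mul_apply]
  set L := ∏ I : ι, Fintype.card ((R ⧸ I.1) ≃ₐ[k] (R ⧸ I.1)) with hL
  have hψIL : ∀ I : ι, (ψI I) ^ L = 1 := by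
    intro I
    obtain ⟨c, hc⟩ := Finset.dvd_prod_of_mem
      (fun I : ι => Fintype.card ((R ⧸ I.1) ≃ₐ[k] (R ⧸ I.1))) (Finset.mem_univ I)
    rw [hL, hc, pow_mul, pow_card_eq_one, one_pow]
  have hψL : ψ ^ L = 1 := by
    refine AlgEquiv.ext fun x => ?_
    have hsub : ∀ I : ι, (ψ ^ L) x - x ∈ I.1 := fun I => by
      refine Ideal.Quotient.eq.mp ?_
      rw [hiter I L x, hψIL I, AlgEquiv.one_apply]
    have h0 := mem_all _ hsub
    have : (ψ ^ L) x = x := by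
      have := sub_eq_zero.mp h0
      exact this
    rw [this, AlgEquiv.one_apply]
  -- assemble
  have hM : σ ^ (Nat.factorial r * L) = 1 := by
    rw [pow_mul, ← hψ, hψL]
  have hLle : L ≤ d ^ d := by
    calc L ≤ ∏ _I : ι, d := Finset.prod_le_prod' (fun I _ => hAut I)
      _ = d ^ r := by rw [Finset.prod_const, Finset.card_univ]
      _ ≤ d ^ d := Nat.pow_le_pow_right hd0 hrd
  have hLpos : 0 < L := Finset.prod_pos (fun I _ => Fintype.card_pos)
  have hMpos : 0 < Nat.factorial r * L := Nat.mul_pos (Nat.factorial_pos r) hLpos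
  have hMle : Nat.factorial r * L ≤ Nat.factorial d * d ^ d :=
    Nat.mul_le_mul (Nat.factorial_le hrd) hLle
  obtain ⟨t, ht⟩ := Nat.dvd_factorial hMpos hMle
  rw [ht, pow_mul, hM, one_pow]



section Cliff

variable {k G V : Type*} [Field k] [Group G] [AddCommGroup V] [Module k V]
  (ρ : G →* (V →ₗ[k] V))

/-- `p` is a simple `S`-invariant submodule. -/
def SimpleSubmod (S : Subgroup G) (p : Submodule k V) : Prop :=
  p ≠ ⊥ ∧ RepInvariant ρ S p ∧ ∀ q ≤ p, RepInvariant ρ S q → q = ⊥ ∨ q = p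

lemma repInv_inf {S : Subgroup G} {p q : Submodule k V} (hp : RepInvariant ρ S p)
    (hq : RepInvariant ρ S q) : RepInvariant ρ S (p ⊓ q) :=
  fun g hg v hv => ⟨hp g hg v hv.1, hq g hg v hv.2⟩

lemma repInv_sup {S : Subgroup G} {p q : Submodule k V} (hp : RepInvariant ρ S p)
    (hq : RepInvariant ρ S q) : RepInvariant ρ S (p ⊔ q) := by
  intro g hg v hv
  obtain ⟨a, ha, b, hb, rfl⟩ := Submodule.mem_sup.1 hv
  rw [map_add]
  exact Submodule.add_mem_sup (hp g hg a ha) (hq g hg b hb)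

lemma repInv_bot (S : Subgroup G) : RepInvariant ρ S (⊥ : Submodule k V) := by
  intro g hg v hv
  rw [Submodule.mem_bot] at hv
  rw [hv, map_zero]
  exact Submodule.zero_mem _

lemma rho_mul_apply (g₁ g₂ : G) (v : V) : ρ g₁ (ρ g₂ v) = ρ (g₁ * g₂) v := by
  rw [map_mul]; rfl

lemma map_map_rho_inv (g : G) (p : Submodule k V) :
    (p.map (ρ g)).map (ρ g⁻¹) = p := by
  rw [← Submodule.map_comp]
  have h : (ρ g⁻¹) ∘ₗ (ρ g) = LinearMap.id := by
    rw [← Module.End.mul_eq_comp, ← map_mul, inv_mul_cancel, map_one]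
    rfl
  rw [h, Submodule.map_id]

lemma repInv_map {H : Subgroup G} [hN : H.Normal] {p : Submodule k V}
    (hp : RepInvariant ρ H p) (g : G) : RepInvariant ρ H (p.map (ρ g)) := by
  rintro h hh v ⟨w, hw, rfl⟩
  refine ⟨ρ (g⁻¹ * h * g) w, hp _ ?_ w hw, ?_⟩
  · have := hN.conj_mem h hh g⁻¹
    simpa [mul_assoc] using this
  · rw [rho_mul_apply, rho_mul_apply]
    congr 2
    group

lemma simpleSubmod_map {H : Subgroup G} [hN : H.Normal] {p : Submodule k V}
    (hp : SimpleSubmod ρ H p) (g : G) : SimpleSubmod ρ H (p.map (ρ g)) := by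
  obtain ⟨hne, hinv, hsimp⟩ := hp
  refine ⟨?_, repInv_map ρ hinv g, ?_⟩
  · intro h0
    apply hne
    have := congrArg (Submodule.map (ρ g⁻¹)) h0
    rwa [map_map_rho_inv, Submodule.map_bot] at this
  · intro q hq hqinv
    have hq' : q.map (ρ g⁻¹) ≤ p := by
      have := Submodule.map_mono (f := ρ g⁻¹) hq
      rwa [map_map_rho_inv] at this
    have hq'' : q = (q.map (ρ g⁻¹)).map (ρ g) := by
      have := map_map_rho_inv ρ g⁻¹ q
      rw [inv_inv] at this
      exact this.symm
    rcases hsimp _ hq' (repInv_map ρ hqinv g⁻¹) with h | h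
    · left; rw [hq'', h, Submodule.map_bot]
    · right; rw [hq'', h]

lemma exists_simple_le [FiniteDimensional k V] (H : Subgroup G) (p : Submodule k V)
    (hp : RepInvariant ρ H p) (hpne : p ≠ ⊥) :
    ∃ s ≤ p, SimpleSubmod ρ H s := by
  have hwf : WellFounded ((· < ·) : Submodule k V → Submodule k V → Prop) := wellFounded_lt
  obtain ⟨m, hm, hmin⟩ := hwf.has_min
    {q : Submodule k V | q ≤ p ∧ q ≠ ⊥ ∧ RepInvariant ρ H q} ⟨p, le_rfl, hpne, hp⟩
  refine ⟨m, hm.1, hm.2.1, hm.2.2, ?_⟩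
  intro q hq hqinv
  by_cases hqb : q = ⊥
  · exact Or.inl hqb
  · right
    by_contra hne
    exact hmin q ⟨le_trans hq hm.1, hqb, hqinv⟩ (lt_of_le_of_ne hq hne)

theorem clifford [FiniteDimensional k V] (H : Subgroup G) [hN : H.Normal]
    (hss : RepSemisimple ρ ⊤) : RepSemisimple ρ H := by
  classical
  -- the sum of all simple H-invariant submodules is ⊤
  set T : Set (Submodule k V) := {p | SimpleSubmod ρ H p} with hT
  have hSSinv : RepInvariant ρ (⊤ : Subgroup G) (sSup T) := by
    intro g _
    have hle : (sSup T).map (ρ g) ≤ sSup T := by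
      have heq : (sSup T).map (ρ g) = ⨆ p : T, (↑p : Submodule k V).map (ρ g) := by
        rw [sSup_eq_iSup', Submodule.map_iSup]
      rw [heq]
      exact iSup_le fun p => le_sSup (show Submodule.map (ρ g) ↑p ∈ T from
        simpleSubmod_map ρ p.2 g)
    intro v hv
    exact hle ⟨v, hv, rfl⟩
  have hSStop : sSup T = ⊤ := by
    obtain ⟨W, hWinv, hWcompl⟩ := hss (sSup T) hSSinv
    by_cases hW : W = ⊥
    · have := hWcompl.codisjoint
      rw [codisjoint_iff, hW, sup_bot_eq] at this
      exact this
    · exfalso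
      have hWinvH : RepInvariant ρ H W := fun g hg => hWinv g trivial
      obtain ⟨s, hsW, hs⟩ := exists_simple_le ρ H W hWinvH hW
      have hsSS : s ≤ sSup T := le_sSup hs
      have : s ≤ ⊥ := by
        have hd := hWcompl.disjoint
        rw [disjoint_iff] at hd
        calc s ≤ sSup T ⊓ W := le_inf hsSS hsW
          _ = ⊥ := hd
      exact hs.1 (le_bot_iff.mp this)
  -- main argument
  intro q hq
  have hwf : WellFounded ((· > ·) : Submodule k V → Submodule k V → Prop) := wellFounded_gt
  obtain ⟨w, hw, hmax⟩ := hwf.has_min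
    {w : Submodule k V | RepInvariant ρ H w ∧ q ⊓ w = ⊥}
    ⟨⊥, repInv_bot ρ H, inf_bot_eq q⟩
  refine ⟨w, hw.1, ?_, ?_⟩
  · rw [disjoint_iff]; exact hw.2
  · rw [codisjoint_iff]
    by_contra hne
    obtain ⟨s, hs, hsnle⟩ : ∃ s ∈ T, ¬ s ≤ q ⊔ w := by
      by_contra hall
      push_neg at hall
      exact hne (top_le_iff.mp (hSStop ▸ sSup_le hall))
    have hsinv := hs.2.1
    have hsqw : s ⊓ (q ⊔ w) = ⊥ := by
      rcases hs.2.2 (s ⊓ (q ⊔ w)) inf_le_left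
        (repInv_inf ρ hsinv (repInv_sup ρ hq hw.1)) with h | h
      · exact h
      · exfalso
        exact hsnle (by rw [← h]; exact inf_le_right)
    have hqws : q ⊓ (w ⊔ s) = ⊥ := by
      rw [eq_bot_iff]
      rintro x ⟨hxq, hxws⟩
      obtain ⟨a, ha, b, hb, hab⟩ := Submodule.mem_sup.1 hxws
      have hbmem : b ∈ s ⊓ (q ⊔ w) := by
        refine ⟨hb, ?_⟩
        have : b = x - a := by rw [← hab]; abel
        rw [this]
        exact Submodule.sub_mem _ (Submodule.mem_sup_left hxq) (Submodule.mem_sup_right ha)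
      rw [hsqw, Submodule.mem_bot] at hbmem
      have hxw : x ∈ q ⊓ w := by
        refine ⟨hxq, ?_⟩
        rw [← hab, hbmem, add_zero]
        exact ha
      rw [hw.2, Submodule.mem_bot] at hxw
      simp [hxw]
    have hwlt : w < w ⊔ s := by
      refine lt_of_le_of_ne le_sup_left ?_
      intro hcontra
      apply hsnle
      calc s ≤ w ⊔ s := le_sup_right
        _ = w := hcontra.symm
        _ ≤ q ⊔ w := le_sup_right
    exact hmax (w ⊔ s) ⟨repInv_sup ρ hw.1 hs.2.1, hqws⟩ hwlt

end Cliff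

section Center

lemma pow_eq_zero_reduce {S : Type*} [Ring S] (hsq : ∀ z : S, z * z = 0 → z = 0) :
    ∀ (m : ℕ) (x : S), x ^ m = 0 → x = 0 := by
  intro m
  induction m using Nat.strong_induction_on with
  | _ m ih =>
    intro x hx
    match m, hx with
    | 0, hx =>
      have h1 : (1 : S) = 0 := by simpa using hx
      calc x = x * 1 := (mul_one x).symm
        _ = 0 := by rw [h1, mul_zero]
    | 1, hx => simpa using hx
    | (m+2), hx =>
      have h2 : x ^ (m+1) * x ^ (m+1) = 0 := by
        rw [← pow_add]
        have he : (m+1) + (m+1) = (m+2) + m := by ring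
        rw [he, pow_add, hx, zero_mul]
      exact ih (m+1) (by omega) x (hsq _ h2)

variable {k G V : Type*} [Field k] [Group G] [AddCommGroup V] [Module k V]
  (ρ : G →* (V →ₗ[k] V)) (H : Subgroup G)

/-- The center of `End_H(V)`, as a subalgebra of `End_k(V)`. -/
def EndCenter : Subalgebra k (Module.End k V) :=
  { carrier := {z | RepEquivariant ρ H z ∧
      ∀ u : Module.End k V, RepEquivariant ρ H u → z * u = u * z}
    mul_mem' := by
      rintro z w ⟨hz1, hz2⟩ ⟨hw1, hw2⟩
      constructor
      · intro h hh v
        show z (w (ρ h v)) = ρ h (z (w v))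
        rw [hw1 h hh v, hz1 h hh (w v)]
      · intro u hu
        calc z * w * u = z * (w * u) := by rw [mul_assoc]
          _ = z * (u * w) := by rw [hw2 u hu]
          _ = z * u * w := by rw [mul_assoc]
          _ = u * z * w := by rw [hz2 u hu]
          _ = u * (z * w) := by rw [mul_assoc]
    one_mem' := by
      constructor
      · intro h hh v; rfl
      · intro u hu; rw [one_mul, mul_one]
    add_mem' := by
      rintro z w ⟨hz1, hz2⟩ ⟨hw1, hw2⟩
      constructor
      · intro h hh v
        show z (ρ h v) + w (ρ h v) = ρ h (z v + w v)
        rw [hz1 h hh v, hw1 h hh v, map_add]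
      · intro u hu
        rw [add_mul, mul_add, hz2 u hu, hw2 u hu]
    zero_mem' := by
      constructor
      · intro h hh v
        show (0 : V) = ρ h 0
        rw [map_zero]
      · intro u hu; rw [zero_mul, mul_zero]
    algebraMap_mem' := by
      intro c
      constructor
      · intro h hh v
        show algebraMap k (Module.End k V) c (ρ h v) = ρ h (algebraMap k (Module.End k V) c v)
        rw [Module.algebraMap_end_apply, Module.algebraMap_end_apply, map_smul]
      · intro u hu
        exact Algebra.commutes c u }

/-- The center is a commutative ring. -/
@[reducible]
def endCenterCommRing : CommRing ↥(EndCenter ρ H) :=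
  { (inferInstance : Ring ↥(EndCenter ρ H)) with
    mul_comm := fun a b => Subtype.ext (a.2.2 b.1 b.2.1) }

lemma rho_cancel₁ (g : G) : ρ g * ρ g⁻¹ = 1 := by
  rw [← map_mul, mul_inv_cancel, map_one]

lemma rho_cancel₂ (g : G) : ρ g⁻¹ * ρ g = 1 := by
  rw [← map_mul, inv_mul_cancel, map_one]

lemma endCenter_isReduced [FiniteDimensional k V] (hssH : RepSemisimple ρ H) :
    IsReduced ↥(EndCenter ρ H) := by
  have hsq : ∀ z : Module.End k V, z ∈ EndCenter ρ H → z * z = 0 → z = 0 := by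
    intro z hz hzz
    have hker_inv : RepInvariant ρ H (LinearMap.ker z) := by
      intro h hh v hv
      rw [LinearMap.mem_ker] at hv ⊢
      rw [hz.1 h hh v, hv, map_zero]
    obtain ⟨q, hqinv, hcompl⟩ := hssH (LinearMap.ker z) hker_inv
    set u : Module.End k V :=
      (LinearMap.ker z).subtype ∘ₗ (LinearMap.ker z).projectionOnto q hcompl with hu
    have hu_apply_left : ∀ v ∈ LinearMap.ker z, u v = v := by
      intro v hv
      show ((LinearMap.ker z).projectionOnto q hcompl v : V) = v
      rw [Submodule.projectionOnto_apply_left hcompl ⟨v, hv⟩]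
    have hu_apply_right : ∀ v ∈ q, u v = 0 := by
      intro v hv
      show ((LinearMap.ker z).projectionOnto q hcompl v : V) = 0
      rw [Submodule.projectionOnto_apply_right hcompl ⟨v, hv⟩]
      rfl
    have hu_equiv : RepEquivariant ρ H u := by
      intro h hh v
      obtain ⟨a, ha, b, hb, rfl⟩ : ∃ a ∈ LinearMap.ker z, ∃ b ∈ q, a + b = v := by
        have hv : v ∈ LinearMap.ker z ⊔ q := by
          rw [hcompl.sup_eq_top]; trivial
        obtain ⟨a, ha, b, hb, hab⟩ := Submodule.mem_sup.1 hv
        exact ⟨a, ha, b, hb, hab⟩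
      calc u (ρ h (a + b)) = u (ρ h a + ρ h b) := by rw [map_add]
        _ = u (ρ h a) + u (ρ h b) := map_add u _ _
        _ = ρ h a + 0 := by
            rw [hu_apply_left _ (hker_inv h hh a ha), hu_apply_right _ (hqinv h hh b hb)]
        _ = ρ h a := add_zero _
        _ = ρ h (u (a + b)) := by
            rw [map_add u a b, hu_apply_left a ha, hu_apply_right b hb, add_zero]
    have hzu : z * u = u * z := hz.2 u hu_equiv
    refine LinearMap.ext fun v => ?_
    show z v = 0
    have hzv_ker : z v ∈ LinearMap.ker z := by
      rw [LinearMap.mem_ker]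
      exact LinearMap.ext_iff.mp hzz v
    have huv_ker : u v ∈ LinearMap.ker z :=
      ((LinearMap.ker z).projectionOnto q hcompl v).2
    calc z v = u (z v) := (hu_apply_left _ hzv_ker).symm
      _ = (u * z) v := rfl
      _ = (z * u) v := by rw [hzu]
      _ = z (u v) := rfl
      _ = 0 := huv_ker
  constructor
  rintro x ⟨m, hm⟩
  refine pow_eq_zero_reduce ?_ m x hm
  intro zz hzz
  apply Subtype.ext
  exact hsq zz.1 zz.2 (congrArg Subtype.val hzz)

variable [hN : H.Normal]

lemma conj_equivariant (g : G) (z : Module.End k V) (hz : RepEquivariant ρ H z) :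
    RepEquivariant ρ H (ρ g * z * ρ g⁻¹) := by
  intro h hh v
  have hmem : g⁻¹ * h * g ∈ H := by
    have := hN.conj_mem h hh g⁻¹
    simpa [mul_assoc] using this
  show ρ g (z (ρ g⁻¹ (ρ h v))) = ρ h (ρ g (z (ρ g⁻¹ v)))
  calc ρ g (z (ρ g⁻¹ (ρ h v)))
      = ρ g (z (ρ (g⁻¹ * h) v)) := by rw [rho_mul_apply]
    _ = ρ g (z (ρ (g⁻¹ * h * g) (ρ g⁻¹ v))) := by
        rw [rho_mul_apply ρ (g⁻¹ * h * g) g⁻¹ v]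
        rw [show g⁻¹ * h * g * g⁻¹ = g⁻¹ * h by group]
    _ = ρ g (ρ (g⁻¹ * h * g) (z (ρ g⁻¹ v))) := by rw [hz _ hmem]
    _ = ρ (g * (g⁻¹ * h * g)) (z (ρ g⁻¹ v)) := by rw [rho_mul_apply]
    _ = ρ (h * g) (z (ρ g⁻¹ v)) := by rw [show g * (g⁻¹ * h * g) = h * g by group]
    _ = ρ h (ρ g (z (ρ g⁻¹ v))) := by rw [rho_mul_apply]

lemma conj_mem_endCenter (g : G) (z : Module.End k V) (hz : z ∈ EndCenter ρ H) :
    ρ g * z * ρ g⁻¹ ∈ EndCenter ρ H := by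
  refine ⟨conj_equivariant ρ H g z hz.1, ?_⟩
  intro u hu
  have hu' : RepEquivariant ρ H (ρ g⁻¹ * u * ρ g) := by
    have := conj_equivariant ρ H g⁻¹ u hu
    rwa [inv_inv] at this
  have h1 : z * (ρ g⁻¹ * u * ρ g) = (ρ g⁻¹ * u * ρ g) * z := hz.2 _ hu'
  calc ρ g * z * ρ g⁻¹ * u
      = ρ g * z * ρ g⁻¹ * u * (ρ g * ρ g⁻¹) := by rw [rho_cancel₁, mul_one]
    _ = ρ g * (z * (ρ g⁻¹ * u * ρ g)) * ρ g⁻¹ := by noncomm_ring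
    _ = ρ g * ((ρ g⁻¹ * u * ρ g) * z) * ρ g⁻¹ := by rw [h1]
    _ = (ρ g * ρ g⁻¹) * (u * (ρ g * z * ρ g⁻¹)) := by noncomm_ring
    _ = u * (ρ g * z * ρ g⁻¹) := by rw [rho_cancel₁, one_mul]

/-- The conjugation action of `G` on the center of `End_H(V)`. -/
def conjAut : G →* (↥(EndCenter ρ H) ≃ₐ[k] ↥(EndCenter ρ H)) :=
  { toFun := fun g =>
      { toFun := fun z => ⟨ρ g * z.1 * ρ g⁻¹, conj_mem_endCenter ρ H g z.1 z.2⟩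
        invFun := fun z => ⟨ρ g⁻¹ * z.1 * ρ g, by
          have := conj_mem_endCenter ρ H g⁻¹ z.1 z.2
          rwa [inv_inv] at this⟩
        left_inv := fun z => Subtype.ext (by
          show ρ g⁻¹ * (ρ g * z.1 * ρ g⁻¹) * ρ g = z.1
          calc ρ g⁻¹ * (ρ g * z.1 * ρ g⁻¹) * ρ g
              = (ρ g⁻¹ * ρ g) * z.1 * (ρ g⁻¹ * ρ g) := by noncomm_ring
            _ = z.1 := by rw [rho_cancel₂, one_mul, mul_one])
        right_inv := fun z => Subtype.ext (by
          show ρ g * (ρ g⁻¹ * z.1 * ρ g) * ρ g⁻¹ = z.1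
          calc ρ g * (ρ g⁻¹ * z.1 * ρ g) * ρ g⁻¹
              = (ρ g * ρ g⁻¹) * z.1 * (ρ g * ρ g⁻¹) := by noncomm_ring
            _ = z.1 := by rw [rho_cancel₁, one_mul, mul_one])
        map_mul' := fun a b => Subtype.ext (by
          show ρ g * (a.1 * b.1) * ρ g⁻¹ = (ρ g * a.1 * ρ g⁻¹) * (ρ g * b.1 * ρ g⁻¹)
          calc ρ g * (a.1 * b.1) * ρ g⁻¹
              = (ρ g * a.1) * (1 : Module.End k V) * (b.1 * ρ g⁻¹) := by noncomm_ring
            _ = (ρ g * a.1) * (ρ g⁻¹ * ρ g) * (b.1 * ρ g⁻¹) := by rw [rho_cancel₂]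
            _ = (ρ g * a.1 * ρ g⁻¹) * (ρ g * b.1 * ρ g⁻¹) := by noncomm_ring)
        map_add' := fun a b => Subtype.ext (by
          show ρ g * (a.1 + b.1) * ρ g⁻¹ = ρ g * a.1 * ρ g⁻¹ + ρ g * b.1 * ρ g⁻¹
          noncomm_ring)
        commutes' := fun c => Subtype.ext (by
          show ρ g * algebraMap k (Module.End k V) c * ρ g⁻¹
            = algebraMap k (Module.End k V) c
          rw [← Algebra.commutes c (ρ g), mul_assoc, rho_cancel₁, mul_one]) }
    map_one' := by
      refine AlgEquiv.ext fun z => Subtype.ext ?_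
      show ρ 1 * z.1 * ρ 1⁻¹ = z.1
      rw [inv_one, map_one, one_mul, mul_one]
    map_mul' := fun a b => by
      refine AlgEquiv.ext fun z => Subtype.ext ?_
      show ρ (a * b) * z.1 * ρ (a * b)⁻¹ = ρ a * (ρ b * z.1 * ρ b⁻¹) * ρ a⁻¹
      rw [mul_inv_rev, map_mul ρ a b, map_mul ρ b⁻¹ a⁻¹]
      noncomm_ring }

lemma conjAut_trivial_of_mem {h : G} (hh : h ∈ H) : conjAut ρ H h = 1 := by
  refine AlgEquiv.ext fun z => Subtype.ext ?_
  show ρ h * z.1 * ρ h⁻¹ = z.1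
  have h1 : z.1 * ρ h = ρ h * z.1 := LinearMap.ext fun v => z.2.1 h hh v
  rw [← h1, mul_assoc, rho_cancel₁, mul_one]

end Center

set_option maxHeartbeats 1000000 in
set_option synthInstance.maxHeartbeats 400000 in
/-- **Theorem (centerDel).** For every positive integer `d` there is a positive integer `n`
depending only on `d` (one may take `n = (d!·d^d)!`) with the following property. Whenever
`G` is a profinite group, `H` a closed normal subgroup with procyclic quotient `Γ = G/H`,
`k` a locally compact field, and `ρ : G → Aut_k(V)` a continuous linear representation on a
`d`-dimensional `k`-vector space `V` such that the `G`-module `V` is semisimple, the center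
of the `k`-algebra `End_H(V)` lies in `End_{G_n}(V)`. -/
theorem center_of_endH_in_endGn (d : ℕ) (hd : 0 < d) :
    ∃ n : ℕ, 0 < n ∧
      ∀ (k : Type u) (G : Type v)
        [Field k] [TopologicalSpace k] [IsTopologicalRing k] [LocallyCompactSpace k]
        [Group G] [TopologicalSpace G] [IsTopologicalGroup G]
        [CompactSpace G] [TotallyDisconnectedSpace G] [T2Space G]
        (H : Subgroup G) [H.Normal],
        IsClosed (H : Set G) →
        Procyclic (G ⧸ H) →
        ∀ ρ : G →* ((Fin d → k) →ₗ[k] (Fin d → k)),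
        (Continuous fun p : G × (Fin d → k) => ρ p.1 p.2) →
        RepSemisimple ρ (⊤ : Subgroup G) →
        ∀ f : (Fin d → k) →ₗ[k] (Fin d → k),
          RepEquivariant ρ H f →
          (∀ u : (Fin d → k) →ₗ[k] (Fin d → k),
            RepEquivariant ρ H u → f ∘ₗ u = u ∘ₗ f) →
          RepEquivariant ρ (subGn H n) f := by
  classical
  refine ⟨Nat.factorial (Nat.factorial d * d ^ d), Nat.factorial_pos _, ?_⟩
  intro k G _ _ _ _ _ _ _ _ _ _ H _ _hHcl _hproc ρ _hcont hss f hfH hfc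
  set n := Nat.factorial (Nat.factorial d * d ^ d) with hn
  have hdV : Module.finrank k (Fin d → k) = d := Module.finrank_fin_fun k
  have hcliff : RepSemisimple ρ H := clifford ρ H hss
  have hfZ : f ∈ EndCenter ρ H := by
    refine ⟨hfH, fun u hu => ?_⟩
    have := hfc u hu
    rwa [Module.End.mul_eq_comp, Module.End.mul_eq_comp]
  letI instCR : CommRing ↥(EndCenter ρ H) := endCenterCommRing ρ H
  letI instRed : IsReduced ↥(EndCenter ρ H) := endCenter_isReduced ρ H hcliff
  set Ψ := conjAut ρ H with hΨ
  have hord : ∀ g : G, Ψ (g ^ n) = 1 := by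
    intro g
    rw [map_pow]
    exact aut_order_bound hdV hd (Subalgebra.val (EndCenter ρ H))
      Subtype.coe_injective (Ψ g)
  have hHle : H ≤ Ψ.ker := fun h hh => MonoidHom.mem_ker.mpr (conjAut_trivial_of_mem ρ H hh)
  have hsub : subGn H n ≤ Ψ.ker := by
    intro x hx
    have hmapped : Subgroup.closure {y : G ⧸ H | ∃ γ : G ⧸ H, γ ^ n = y} ≤
        Ψ.ker.map (QuotientGroup.mk' H) := by
      rw [Subgroup.closure_le]
      rintro y ⟨γ, rfl⟩
      obtain ⟨g, rfl⟩ := QuotientGroup.mk'_surjective H γ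
      exact ⟨g ^ n, MonoidHom.mem_ker.mpr (hord g), by rw [map_pow]⟩
    obtain ⟨y, hy, hyx⟩ := hmapped hx
    have hyx' : (y : G ⧸ H) = (x : G ⧸ H) := hyx
    have hinH : y⁻¹ * x ∈ H := QuotientGroup.eq.mp hyx'
    have hxe : x = y * (y⁻¹ * x) := by group
    rw [hxe]
    exact Subgroup.mul_mem _ hy (hHle hinH)
  intro g hg v
  have hgker : Ψ g = 1 := MonoidHom.mem_ker.mp (hsub hg)
  have hfix : ρ g * f * ρ g⁻¹ = f := by
    have := AlgEquiv.ext_iff.mp hgker ⟨f, hfZ⟩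
    exact congrArg Subtype.val this
  have hcomm : f * ρ g = ρ g * f := by
    calc f * ρ g = (ρ g * f * ρ g⁻¹) * ρ g := by rw [hfix]
      _ = ρ g * f * (ρ g⁻¹ * ρ g) := by rw [mul_assoc]
      _ = ρ g * f := by rw [rho_cancel₂, mul_one]
  exact LinearMap.ext_iff.mp hcomm v
end
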